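/- For integer k ≥ 2, lim_{q→1⁻} ζ_q(k) = ζ(k), where ζ_q(k) = ∑_{n≥1} q^{n(k−1)}/[n]_q^k. -/

import Mathlib

open Finset Filter

lemma geom_eq (q : ℝ) (hq1 : q ≠ 1) (n : ℕ) :
    (1 - q ^ (n + 1)) / (1 - q) = ∑ j ∈ range (n + 1), q ^ j := by
  rw [geom_sum_eq hq1]
  rw [div_eq_div_iff (sub_ne_zero.2 (fun h => hq1 h.symm)) (sub_ne_zero.2 hq1)]
  ring

lemma cs_bound (q : ℝ) (hq0 : 0 ≤ q) (n : ℕ) :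
    ((n : ℝ) + 1) ^ 2 * q ^ n ≤ (∑ j ∈ range (n + 1), q ^ j) ^ 2 := by
  set r := Real.sqrt q with hr
  have hr2 : r ^ 2 = q := Real.sq_sqrt hq0
  have key := Finset.sum_mul_sq_le_sq_mul_sq (range (n + 1)) (fun j => r ^ j)
      (fun j => r ^ (n - j))
  have h1 : ∀ j ∈ range (n + 1), r ^ j * r ^ (n - j) = r ^ n := by
    intro j hj
    rw [← pow_add]
    congr 1
    simp only [mem_range] at hj
    omega
  rw [Finset.sum_congr rfl h1, Finset.sum_const, card_range, nsmul_eq_mul] at key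
  have h2 : ∀ j, (r ^ j) ^ 2 = q ^ j := fun j => by rw [← pow_mul, mul_comm, pow_mul, hr2]
  simp only [h2] at key
  have h3 : (∑ i ∈ range (n + 1), q ^ (n - i)) = ∑ j ∈ range (n + 1), q ^ j := by
    rw [← Finset.sum_range_reflect]
    apply Finset.sum_congr rfl
    intro j hj
    simp only [mem_range] at hj
    congr 1
    omega
  rw [h3] at key
  calc ((n : ℝ) + 1) ^ 2 * q ^ n = ((↑(n + 1) : ℝ) * r ^ n) ^ 2 := by
        push_cast; rw [mul_pow, h2]
    _ ≤ _ := key.trans_eq (sq (∑ j ∈ range (n + 1), q ^ j)).symm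

-- the key uniform bound
lemma term_bound (k : ℕ) (hk : 2 ≤ k) (q : ℝ) (hq : q ∈ Set.Ioo (0:ℝ) 1) (n : ℕ) :
    q ^ ((n + 1) * (k - 1)) / (((1 - q ^ (n + 1)) / (1 - q)) ^ k) ≤ 1 / ((n : ℝ) + 1) ^ k := by
  obtain ⟨hq0, hq1⟩ := hq
  have hq1' : q ≠ 1 := ne_of_lt hq1
  rw [geom_eq q hq1' n]
  set S : ℝ := ∑ j ∈ range (n + 1), q ^ j with hS
  have hSpos : 0 < S := by
    apply Finset.sum_pos (fun j _ => pow_pos hq0 j) nonempty_range_add_one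
  have hn1 : (0:ℝ) < (n : ℝ) + 1 := by positivity
  rw [div_le_div_iff₀ (pow_pos hSpos k) (pow_pos hn1 k)]
  -- goal: q ^ ((n+1)*(k-1)) * (n+1)^k ≤ 1 * S^k; suffices squared version
  have hsq : (q ^ ((n + 1) * (k - 1)) * ((n:ℝ) + 1) ^ k) ^ 2 ≤ (S ^ k) ^ 2 := by
    have h1 : ((n:ℝ) + 1) ^ 2 * q ^ n ≤ S ^ 2 := cs_bound q hq0.le n
    have h2 : (((n:ℝ) + 1) ^ 2 * q ^ n) ^ k ≤ (S ^ 2) ^ k :=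
      pow_le_pow_left₀ (by positivity) h1 k
    have h3 : q ^ (2 * ((n + 1) * (k - 1))) ≤ q ^ (n * k) := by
      apply pow_le_pow_of_le_one hq0.le hq1.le
      obtain ⟨m, rfl⟩ : ∃ m, k = m + 2 := ⟨k - 2, by omega⟩
      have hm : m + 2 - 1 = m + 1 := rfl
      rw [hm]
      nlinarith [Nat.zero_le (n * m)]
    calc (q ^ ((n + 1) * (k - 1)) * ((n:ℝ) + 1) ^ k) ^ 2
        = ((n:ℝ) + 1) ^ (2 * k) * q ^ (2 * ((n + 1) * (k - 1))) := by
          rw [mul_pow, ← pow_mul, ← pow_mul]; ring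
      _ ≤ ((n:ℝ) + 1) ^ (2 * k) * q ^ (n * k) := by
          apply mul_le_mul_of_nonneg_left h3 (by positivity)
      _ = (((n:ℝ) + 1) ^ 2 * q ^ n) ^ k := by
          rw [mul_pow, ← pow_mul, ← pow_mul, Nat.mul_comm n k, Nat.mul_comm 2 k]
      _ ≤ (S ^ 2) ^ k := h2
      _ = (S ^ k) ^ 2 := by rw [← pow_mul, ← pow_mul]; ring_nf
  have := (pow_le_pow_iff_left₀ (a := q ^ ((n + 1) * (k - 1)) * ((n:ℝ) + 1) ^ k)
      (b := S ^ k) (by positivity) (by positivity) (two_ne_zero)).mp hsq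
  linarith

theorem stmt_14 (k : ℕ) (hk : 2 ≤ k) :
    Filter.Tendsto
      (fun q : ℝ => ∑' n : ℕ, q ^ ((n + 1) * (k - 1)) / (((1 - q ^ (n + 1)) / (1 - q)) ^ k))
      (nhdsWithin 1 (Set.Ioo 0 1)) (nhds (∑' n : ℕ, 1 / ((n : ℝ) + 1) ^ k)) := by
  have hsum : Summable (fun n : ℕ => 1 / ((n : ℝ) + 1) ^ k) := by
    have h := (summable_nat_add_iff 1).mpr (Real.summable_one_div_nat_pow.mpr hk)
    simpa using h
  have hlim : ∀ n : ℕ, Filter.Tendsto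
      (fun q : ℝ => q ^ ((n + 1) * (k - 1)) / (((1 - q ^ (n + 1)) / (1 - q)) ^ k))
      (nhdsWithin 1 (Set.Ioo 0 1)) (nhds (1 / ((n : ℝ) + 1) ^ k)) := by
    intro n
    have hcont : ContinuousAt (fun q : ℝ =>
        q ^ ((n + 1) * (k - 1)) / (∑ j ∈ range (n + 1), q ^ j) ^ k) 1 := by
      apply ContinuousAt.div (by fun_prop) (by fun_prop)
      have h0 : (∑ j ∈ range (n + 1), (1:ℝ) ^ j) = (n : ℝ) + 1 := by
        simp
      rw [h0]
      positivity
    have hval : (1:ℝ) ^ ((n + 1) * (k - 1)) / (∑ j ∈ range (n + 1), (1:ℝ) ^ j) ^ k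
        = 1 / ((n : ℝ) + 1) ^ k := by
      norm_num
    have := (hcont.tendsto.mono_left nhdsWithin_le_nhds :
      Filter.Tendsto _ (nhdsWithin 1 (Set.Ioo (0:ℝ) 1)) _)
    rw [hval] at this
    apply Filter.Tendsto.congr' _ this
    filter_upwards [self_mem_nhdsWithin] with q hq
    rw [geom_eq q (ne_of_lt hq.2) n]
  have hbound : ∀ᶠ q : ℝ in nhdsWithin 1 (Set.Ioo 0 1), ∀ n : ℕ,
      ‖q ^ ((n + 1) * (k - 1)) / (((1 - q ^ (n + 1)) / (1 - q)) ^ k)‖ ≤ 1 / ((n : ℝ) + 1) ^ k := by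
    filter_upwards [self_mem_nhdsWithin] with q hq n
    rw [Real.norm_eq_abs, abs_of_nonneg]
    · exact term_bound k hk q hq n
    · obtain ⟨hq0, hq1⟩ := hq
      have : (0:ℝ) < (1 - q ^ (n + 1)) / (1 - q) := by
        apply div_pos <;> [skip; linarith]
        have : q ^ (n + 1) < 1 := pow_lt_one₀ hq0.le hq1 (by omega)
        linarith
      positivity
  exact tendsto_tsum_of_dominated_convergence hsum hlim hbound
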